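/- arXiv:2408.14059 — 5 statements merged into one kernel-verified Lean document; each statement's English description precedes it below -/
import Mathlib

section
/- Let s be a binary sequence that is linearly recurrent with constant C > 0, i.e., any two consecutive occurrences of any factor of length n of s are at distance at most C·n. Then for every k ≥ 1 there exists a constant c > 0 such that C_{2k}(s, N) ≥ c·N for all sufficiently large N. -/
/-- The correlation sum `V(s, M, D)` of a sequence `s`. -/
def corrV (s : ℕ → ℕ) (M : ℕ) {k : ℕ} (D : Fin k → ℕ) : ℤ :=
  ∑ n ∈ Finset.range M, (-1 : ℤ) ^ (∑ i, s (n + D i))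

/-- The `N`th correlation measure of order `k` of the sequence `s`. -/
noncomputable def corrMeasure (s : ℕ → ℕ) (k N : ℕ) : ℕ :=
  sSup {c : ℕ | ∃ M : ℕ, ∃ D : Fin k → ℕ, 0 < M ∧ StrictMono D ∧
    (∀ i, M + D i ≤ N) ∧ c = (corrV s M D).natAbs}

/-- `s` is linearly recurrent with constant `C`: after any occurrence (at position `i`)
of any length-`n` factor of `s`, the next occurrence is at distance at most `C·n`. -/
def LinRec (s : ℕ → ℕ) (C : ℝ) : Prop :=
  ∀ i n : ℕ, 0 < n → ∃ j : ℕ, i < j ∧ (j : ℝ) ≤ i + C * n ∧ ∀ m < n, s (j + m) = s (i + m)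

lemma corrV_natAbs_le (s : ℕ → ℕ) (M : ℕ) {k : ℕ} (D : Fin k → ℕ) :
    (corrV s M D).natAbs ≤ M := by
  have h : |corrV s M D| ≤ (M : ℤ) := by
    calc |corrV s M D| ≤ ∑ n ∈ Finset.range M, |(-1:ℤ)^(∑ i, s (n + D i))| :=
          Finset.abs_sum_le_sum_abs _ _
      _ = ∑ _n ∈ Finset.range M, 1 := by
          apply Finset.sum_congr rfl; intro x _; rw [abs_pow, abs_neg, abs_one, one_pow]
      _ = M := by simp
  rw [Int.abs_eq_natAbs] at h
  exact_mod_cast h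

lemma sum_range_split {A : Type*} [AddCommMonoid A] (f : ℕ → A) (a b : ℕ) :
    ∑ i ∈ Finset.range (a + b), f i
      = (∑ i ∈ Finset.range a, f i) + ∑ i ∈ Finset.range b, f (a + i) := by
  induction b with
  | zero => simp
  | succ b ih =>
      rw [Nat.add_succ, Finset.sum_range_succ, Finset.sum_range_succ, ih, add_assoc]

/-- A linearly recurrent binary sequence has linearly large even-order correlation measures. -/
theorem stmt2 (s : ℕ → ℕ) (hbin : ∀ n, s n ≤ 1) (C : ℝ) (hC : 0 < C)
    (hlr : LinRec s C) (k : ℕ) (hk : 1 ≤ k) :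
    ∃ c : ℝ, 0 < c ∧ ∃ N₀ : ℕ, ∀ N ≥ N₀, c * N ≤ (corrMeasure s (2 * k) N : ℝ) := by
  have hC1 : (0:ℝ) < 1 + C := by linarith
  refine ⟨1/(2*(1+C)), by positivity, ⌈4*(k:ℝ)*(1+C)⌉₊ + 1, fun N hN => ?_⟩
  set n := ⌊(N:ℝ)/(1+C)⌋₊ with hn
  have hNlb : 4*(k:ℝ)*(1+C) ≤ N := by
    have h1 : (⌈4*(k:ℝ)*(1+C)⌉₊ : ℝ) ≤ N := by
      exact_mod_cast Nat.le_of_succ_le hN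
    exact le_trans (Nat.le_ceil _) h1
  have hnN : (1+C) * n ≤ (N:ℝ) := by
    have h := Nat.floor_le (R := ℝ) (a := (N:ℝ)/(1+C)) (by positivity)
    rw [← hn] at h
    calc (1+C)*(n:ℝ) ≤ (1+C)*((N:ℝ)/(1+C)) := by nlinarith
      _ = N := by field_simp
  have hfl : (N:ℝ)/(1+C) < n + 1 := Nat.lt_floor_add_one _
  have hkn : 4*k ≤ n := by
    have h1 : 4*(k:ℝ) ≤ (N:ℝ)/(1+C) := by
      rw [le_div_iff₀ hC1]; linarith
    have h2 : (4*k:ℝ) < (n:ℝ) + 1 := lt_of_le_of_lt h1 hfl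
    have h3 : 4*k < n + 1 := by exact_mod_cast h2
    omega
  obtain ⟨j, hj0, hjle, hjrep⟩ := hlr 0 n (by omega)
  simp only [Nat.cast_zero, zero_add] at hjle
  have hrep : ∀ m, m < n → s (m + j) = s m := by
    intro m hm
    have := hjrep m hm
    simpa [Nat.add_comm] using this
  have hiter : ∀ t m, m + t*j < n + j → s (m + t*j) = s m := by
    intro t
    induction t with
    | zero => simp
    | succ t ih =>
        intro m hm
        rw [Nat.succ_mul] at hm ⊢
        have h1 : m + t*j < n := by omega
        rw [← Nat.add_assoc] at hm ⊢
        rw [hrep _ h1]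
        exact ih m (by omega)
  -- the period d, a multiple of j with k ≤ d ≤ k - 1 + j
  set q := (k-1)/j with hq
  set d := (q+1)*j with hd
  have hdmod := Nat.div_add_mod (k-1) j
  have hmlt : (k-1) % j < j := Nat.mod_lt _ hj0
  have hdk : k ≤ d ∧ d ≤ k - 1 + j := by
    have h1 : j * q + (k-1) % j = k - 1 := by rw [hq]; exact hdmod
    have h2 : d = j * q + j := by rw [hd]; ring
    constructor <;> omega
  have hds : ∀ m, m + d < n + j → s (m + d) = s m := fun m hm => hiter (q+1) m hm
  -- the shift vector
  set M := n - 2*k + 1 with hM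
  set D : Fin (2*k) → ℕ := fun i => if (i:ℕ) < k then (i:ℕ) else d + ((i:ℕ) - k) with hD
  have hmono : StrictMono D := by
    intro a b hab
    have hab' : (a:ℕ) < (b:ℕ) := hab
    simp only [hD]
    split <;> split <;> omega
  have hjn : n + j ≤ N := by
    have h1 : (n:ℝ) + j ≤ (1+C)*n := by nlinarith
    have h2 : ((n + j : ℕ) : ℝ) ≤ (N:ℝ) := by push_cast; linarith
    exact_mod_cast h2
  have hcons : ∀ i, M + D i ≤ N := by
    intro i
    have hi : (i:ℕ) < 2*k := i.isLt
    simp only [hD]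
    split <;> omega
  -- value of the correlation sum
  have hval : corrV s M D = M := by
    rw [corrV]
    have hterm : ∀ x ∈ Finset.range M, ((-1:ℤ)) ^ (∑ i, s (x + D i)) = 1 := by
      intro x hx
      rw [Finset.mem_range] at hx
      have hexp : (∑ i, s (x + D i)) = 2 * ∑ i ∈ Finset.range k, s (x + i) := by
        have h1 : (∑ i : Fin (2*k), s (x + D i))
            = ∑ i ∈ Finset.range (2*k),
                s (x + if i < k then i else d + (i - k)) := by
          rw [← Fin.sum_univ_eq_sum_range (fun i => s (x + if i < k then i else d + (i - k)))]
        rw [h1]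
        have h2 : 2*k = k + k := by ring
        rw [h2, sum_range_split]
        have h3 : ∀ i ∈ Finset.range k,
            s (x + if i < k then i else d + (i - k)) = s (x + i) := by
          intro i hi
          rw [Finset.mem_range] at hi
          simp [hi]
        have h4 : ∀ i ∈ Finset.range k,
            s (x + if k + i < k then (k+i) else d + ((k+i) - k)) = s (x + i) := by
          intro i hi
          rw [Finset.mem_range] at hi
          have : ¬ (k + i < k) := by omega
          simp only [this, if_false]
          have he : k + i - k = i := by omega
          rw [he]
          have : x + (d + i) = (x + i) + d := by ring
          rw [this]
          exact hds (x + i) (by omega)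
        rw [Finset.sum_congr rfl h3, Finset.sum_congr rfl h4]
        ring
      rw [hexp]
      exact Even.neg_one_pow ⟨_, (two_mul _)⟩
    rw [Finset.sum_congr rfl hterm]
    simp
  -- conclude
  have hmem : M ∈ {c : ℕ | ∃ M' : ℕ, ∃ D' : Fin (2*k) → ℕ, 0 < M' ∧ StrictMono D' ∧
      (∀ i, M' + D' i ≤ N) ∧ c = (corrV s M' D').natAbs} :=
    ⟨M, D, by omega, hmono, hcons, by rw [hval]; simp⟩
  have hbdd : BddAbove {c : ℕ | ∃ M' : ℕ, ∃ D' : Fin (2*k) → ℕ, 0 < M' ∧ StrictMono D' ∧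
      (∀ i, M' + D' i ≤ N) ∧ c = (corrV s M' D').natAbs} := by
    refine ⟨N, fun c hc => ?_⟩
    obtain ⟨M', D', hM', _, hle, hc⟩ := hc
    have := corrV_natAbs_le s M' D'
    have h0 := hle ⟨0, by omega⟩
    omega
  have hle : M ≤ corrMeasure s (2*k) N := le_csSup hbdd hmem
  have hMr : ((n:ℝ) - 2*k + 1) ≤ (M:ℝ) := by
    have : (M:ℝ) = (n:ℝ) - 2*k + 1 := by
      rw [hM]; push_cast [Nat.cast_sub (by omega : 2*k ≤ n)]; ring
    linarith [this.ge]
  have hfin : 1/(2*(1+C)) * N ≤ (M:ℝ) := by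
    have h1 : (N:ℝ)/(1+C) - 1 < (n:ℝ) := by
      have := hfl; linarith
    have h2 : 2*(k:ℝ)*(1+C) ≤ (N:ℝ)/2 := by linarith
    rw [div_mul_eq_mul_div, one_mul, div_le_iff₀ (by positivity)]
    have h3 : (N:ℝ)/(1+C) ≥ 4*k := by rw [ge_iff_le, le_div_iff₀ hC1]; linarith
    -- M ≥ n - 2k + 1 > N/(1+C) - 2k ≥ N/(2(1+C))
    have h4 : (N:ℝ)/(2*(1+C)) ≤ (N:ℝ)/(1+C) - 2*k := by
      rw [div_le_iff₀ (by positivity)] at *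
      have : (N:ℝ)/(1+C) * (1+C) = N := by field_simp
      nlinarith [h3]
    have h5 : (N:ℝ)/(2*(1+C)) ≤ (M:ℝ) := by
      have := hMr
      linarith
    calc (N:ℝ) = (N:ℝ)/(2*(1+C)) * (2*(1+C)) := by field_simp
      _ ≤ (M:ℝ) * (2*(1+C)) := by nlinarith
  calc 1/(2*(1+C)) * N ≤ (M:ℝ) := hfin
    _ ≤ (corrMeasure s (2*k) N : ℝ) := by exact_mod_cast hle
end

section
/- Let s be a linearly recurrent binary sequence with constant C. For sufficiently large N, there exists d with 1 ≤ d ≤ C·⌊N/(C+1)⌋ such that s(i) = s(d+i) for all 0 ≤ i < ⌊N/(C+1)⌋, and consequently with D = (0,d) and M = ⌊N/(C+1)⌋ we have Σ_{n=0}^{M-1} (-1)^{s(n)+s(n+d)} = M; hence C_2(s,N) ≥ ⌊N/(C+1)⌋. -/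
/-- `s` is linearly recurrent with constant `C`. -/
def LinRecN (s : ℕ → ℕ) (C : ℕ) : Prop :=
  ∀ i n : ℕ, 0 < n → ∃ j : ℕ, i < j ∧ j ≤ i + C * n ∧ ∀ m < n, s (j + m) = s (i + m)

/-- For a linearly recurrent binary sequence `s` with constant `C` and large `N`,
the prefix of length `⌊N/(C+1)⌋` reoccurs at some shift `d ≤ C⌊N/(C+1)⌋`, the order-2
correlation sum with `D = (0,d)` and `M = ⌊N/(C+1)⌋` equals `M`, and hence
`C_2(s,N) ≥ ⌊N/(C+1)⌋`. -/
theorem stmt3 (s : ℕ → ℕ) (hbin : ∀ n, s n ≤ 1) (C : ℕ) (hC : 0 < C)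
    (hlr : LinRecN s C) :
    ∃ N₀ : ℕ, ∀ N ≥ N₀, ∃ d : ℕ, 1 ≤ d ∧ d ≤ C * (N / (C + 1)) ∧
      (∀ i < N / (C + 1), s i = s (d + i)) ∧
      (∑ n ∈ Finset.range (N / (C + 1)), (-1 : ℤ) ^ (s n + s (n + d)))
        = (N / (C + 1) : ℕ) ∧
      N / (C + 1) ≤ corrMeasure s 2 N := by
  refine ⟨C + 1, fun N hN => ?_⟩
  set M := N / (C + 1) with hMdef
  have hM1 : 1 ≤ M := (Nat.one_le_div_iff (by omega)).mpr hN
  have hMN : (C + 1) * M ≤ N := by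
    rw [mul_comm]; exact Nat.div_mul_le_self N (C + 1)
  obtain ⟨d, hd0, hdle, hrep⟩ := hlr 0 M hM1
  have hdle' : d ≤ C * M := by simpa using hdle
  have hrep' : ∀ i < M, s i = s (d + i) := fun i hi => by
    have := hrep i hi; simpa using this.symm
  have hsum : (∑ n ∈ Finset.range M, (-1 : ℤ) ^ (s n + s (n + d))) = (M : ℤ) := by
    rw [Finset.sum_congr rfl (fun n hn => ?_), Finset.sum_const, Finset.card_range,
      nsmul_eq_mul, mul_one]
    have h1 : s (n + d) = s n := by
      rw [add_comm]; exact (hrep' n (Finset.mem_range.mp hn)).symm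
    rw [h1, ← two_mul]
    exact Even.neg_one_pow ⟨s n, two_mul (s n)⟩
  refine ⟨d, hd0, hdle', hrep', hsum, ?_⟩
  have hmem : M ∈ {c : ℕ | ∃ M' : ℕ, ∃ D : Fin 2 → ℕ, 0 < M' ∧ StrictMono D ∧
      (∀ i, M' + D i ≤ N) ∧ c = (corrV s M' D).natAbs} := by
    refine ⟨M, ![0, d], hM1, ?_, ?_, ?_⟩
    · intro a b hab
      fin_cases a <;> fin_cases b <;> simp_all <;> omega
    · have hkey : M + C * M = (C + 1) * M := by ring
      intro i
      fin_cases i <;> simp <;> omega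
    · have : corrV s M ![0, d] = (M : ℤ) := by
        rw [corrV]
        rw [← hsum]
        refine Finset.sum_congr rfl fun n _ => ?_
        simp [Fin.sum_univ_two]
      rw [this]; simp
  have hbdd : BddAbove {c : ℕ | ∃ M' : ℕ, ∃ D : Fin 2 → ℕ, 0 < M' ∧ StrictMono D ∧
      (∀ i, M' + D i ≤ N) ∧ c = (corrV s M' D).natAbs} := by
    refine ⟨N, fun c hc => ?_⟩
    obtain ⟨M', D, hM', hDmono, hDle, hceq⟩ := hc
    calc c = (corrV s M' D).natAbs := hceq
      _ ≤ M' := corrV_natAbs_le s M' D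
      _ ≤ N := le_trans (Nat.le_add_right M' (D 0)) (hDle 0)
  exact le_csSup hbdd hmem
end

section
/- Let s be a binary sequence that is not ultimately periodic, with factor complexity p_s(N) counting the number of distinct factors of length N. Then for every k ≥ 1 and every N ≥ 1, within the prefix of length k·p_s(N) + N of s there is a factor of length N occurring at least k+1 times; consequently C_{2}(s, (k+1)·(p_s(N)+N)) ≥ N for k = 1, and more generally C_{2k}(s, 2k·(p_s(N)+N)) ≥ N. -/
/-- The factor complexity of `s`: the number of distinct length-`N` factors of `s`. -/
noncomputable def factComp (s : ℕ → ℕ) (N : ℕ) : ℕ :=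
  Set.ncard {w : Fin N → ℕ | ∃ i : ℕ, ∀ j : Fin N, w j = s (i + (j : ℕ))}

lemma fact_finite (s : ℕ → ℕ) (hbin : ∀ n, s n ≤ 1) (N : ℕ) :
    {w : Fin N → ℕ | ∃ i : ℕ, ∀ j : Fin N, w j = s (i + (j : ℕ))}.Finite := by
  apply Set.Finite.subset (Set.Finite.pi (fun _ : Fin N => Set.finite_Iic 1))
  rintro w ⟨i, hi⟩
  intro j _
  simp only [Set.mem_Iic, hi j]
  exact hbin _

lemma occ (s : ℕ → ℕ) (hbin : ∀ n, s n ≤ 1) (N : ℕ) (m : ℕ) :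
    ∃ t : Fin (m + 1) → ℕ, StrictMono t ∧ (∀ i, t i ≤ m * factComp s N) ∧
      ∀ i j : Fin (m + 1), ∀ n < N, s (t i + n) = s (t j + n) := by
  classical
  have hfin := fact_finite s hbin N
  have hp : hfin.toFinset.card = factComp s N := by
    rw [factComp, Set.ncard_eq_toFinset_card _ hfin]
  have hmaps : ∀ a ∈ Finset.range (m * factComp s N + 1),
      (fun j : Fin N => s (a + (j : ℕ))) ∈ hfin.toFinset := by
    intro a _
    rw [Set.Finite.mem_toFinset]
    exact ⟨a, fun j => rfl⟩
  have hlt : hfin.toFinset.card * m < (Finset.range (m * factComp s N + 1)).card := by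
    rw [Finset.card_range, hp, mul_comm]
    omega
  obtain ⟨y, _, hy⟩ := Finset.exists_lt_card_fiber_of_mul_lt_card_of_maps_to hmaps hlt
  have hcard : m + 1 ≤ ((Finset.range (m * factComp s N + 1)).filter
      (fun x => (fun j : Fin N => s (x + (j : ℕ))) = y)).card := hy
  refine ⟨fun i => Finset.orderEmbOfCardLe _ hcard i,
    (Finset.orderEmbOfCardLe _ hcard).strictMono, ?_, ?_⟩
  · intro i
    have := Finset.orderEmbOfCardLe_mem _ hcard i
    simp only [Finset.mem_filter, Finset.mem_range] at this
    exact Nat.lt_succ_iff.mp this.1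
  · intro i j n hn
    have hi := Finset.orderEmbOfCardLe_mem _ hcard i
    have hj := Finset.orderEmbOfCardLe_mem _ hcard j
    simp only [Finset.mem_filter, Finset.mem_range] at hi hj
    have h := congrFun (hi.2.trans hj.2.symm) ⟨n, hn⟩
    simpa using h

/-- For a non-ultimately-periodic binary sequence `s`, within the prefix of length
`k·p_s(N)+N` some length-`N` factor occurs at least `k+1` times; consequently
`C_{2k}(s, 2k(p_s(N)+N)) ≥ N`. -/
theorem stmt6 (s : ℕ → ℕ) (hbin : ∀ n, s n ≤ 1)
    (hnp : ¬ ∃ p N₀ : ℕ, 0 < p ∧ ∀ n ≥ N₀, s (n + p) = s n)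
    (k N : ℕ) (hk : 1 ≤ k) (hN : 1 ≤ N) :
    (∃ t : Fin (k + 1) → ℕ, StrictMono t ∧
      (∀ i, t i + N ≤ k * factComp s N + N) ∧
      ∀ i j : Fin (k + 1), ∀ n < N, s (t i + n) = s (t j + n)) ∧
    N ≤ corrMeasure s (2 * k) (2 * k * (factComp s N + N)) := by
  constructor
  · obtain ⟨t, h1, h2, h3⟩ := occ s hbin N k
    exact ⟨t, h1, fun i => by have := h2 i; omega, h3⟩
  · obtain ⟨t, hmono, hb, heq⟩ := occ s hbin N (2 * k - 1)
    have h2k : 2 * k = 2 * k - 1 + 1 := by omega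
    set D : Fin (2 * k) → ℕ := fun i => t (Fin.cast h2k i) with hD
    have hDmono : StrictMono D := by
      intro a b hab
      exact hmono (show Fin.cast h2k a < Fin.cast h2k b from hab)
    have hbound : ∀ i, N + D i ≤ 2 * k * (factComp s N + N) := by
      intro i
      have h1 : D i ≤ (2 * k - 1) * factComp s N := hb _
      have h2 : (2 * k - 1) * factComp s N ≤ 2 * k * factComp s N :=
        Nat.mul_le_mul_right _ (by omega)
      have h3 : N ≤ 2 * k * N := Nat.le_mul_of_pos_left N (by omega)
      have h4 : 2 * k * (factComp s N + N) = 2 * k * factComp s N + 2 * k * N := by ring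
      omega
    have hpos : 0 < 2 * k := by omega
    have hval : corrV s N D = N := by
      have key : ∀ n ∈ Finset.range N, (-1 : ℤ) ^ (∑ i, s (n + D i)) = 1 := by
        intro n hn
        have hn' : n < N := Finset.mem_range.mp hn
        have he : ∀ i : Fin (2 * k), s (n + D i) = s (n + D ⟨0, hpos⟩) := by
          intro i
          rw [add_comm n (D i), add_comm n (D ⟨0, hpos⟩)]
          exact heq _ _ n hn'
        rw [Finset.sum_congr rfl (fun i _ => he i), Finset.sum_const, Finset.card_univ,
          Fintype.card_fin, smul_eq_mul]
        exact Even.neg_one_pow ⟨k * s (n + D ⟨0, hpos⟩), by ring⟩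
      rw [corrV, Finset.sum_congr rfl key, Finset.sum_const, Finset.card_range,
        nsmul_eq_mul, mul_one]
    have hmem : N ∈ {c : ℕ | ∃ M : ℕ, ∃ D : Fin (2 * k) → ℕ, 0 < M ∧ StrictMono D ∧
        (∀ i, M + D i ≤ 2 * k * (factComp s N + N)) ∧ c = (corrV s M D).natAbs} :=
      ⟨N, D, by omega, hDmono, hbound, by rw [hval]; simp⟩
    have hbdd : BddAbove {c : ℕ | ∃ M : ℕ, ∃ D : Fin (2 * k) → ℕ, 0 < M ∧ StrictMono D ∧
        (∀ i, M + D i ≤ 2 * k * (factComp s N + N)) ∧ c = (corrV s M D).natAbs} := by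
      refine ⟨2 * k * (factComp s N + N), ?_⟩
      rintro c ⟨M, E, hM, hE, hle, rfl⟩
      have h1 : (corrV s M E).natAbs ≤ M := by
        have habs : |corrV s M E| ≤ (M : ℤ) := by
          calc |corrV s M E|
              ≤ ∑ n ∈ Finset.range M, |(-1 : ℤ) ^ (∑ i, s (n + E i))| :=
                Finset.abs_sum_le_sum_abs _ _
            _ = ∑ n ∈ Finset.range M, 1 := by
                refine Finset.sum_congr rfl (fun n _ => ?_)
                rw [abs_pow]
                simp
            _ = M := by simp
        rw [Int.abs_eq_natAbs] at habs
        exact_mod_cast habs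
      have h2 := hle ⟨0, hpos⟩
      omega
    exact le_csSup hbdd hmem
end

section
/- Let F be the sequence defined by F(0) = 1, F(1) = 2, F(n+2) = F(n+1) + F(n). Every non-negative integer n has a unique representation n = Σ_i c_i F(i) with c_i ∈ {0,1}, no two consecutive c_i equal to 1, and leading coefficient nonzero (Zeckendorf's theorem). -/
open List Nat

private instance instTransGap : IsTrans ℕ (fun a b ↦ b + 2 ≤ a) where
  trans _a _b _c hba hcb := hcb.trans <| le_self_add.trans hba

private lemma zeck_facts {l : List ℕ} (h : l.IsZeckendorfRep) :
    l.Pairwise (fun a b => b + 2 ≤ a) ∧ ∀ a ∈ l, 2 ≤ a := by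
  have h' := h
  rw [List.IsZeckendorfRep, List.isChain_iff_pairwise, List.pairwise_append] at h'
  exact ⟨h'.1, fun a ha => by simpa using h'.2.2 a ha 0 (by simp)⟩

private lemma listOf_isZeck (S : Finset ℕ) (hS : ∀ i ∈ S, i + 1 ∉ S) :
    (((S.sort (· ≤ ·)).map (· + 2)).reverse).IsZeckendorfRep := by
  rw [List.IsZeckendorfRep, List.isChain_iff_pairwise, List.pairwise_append]
  refine ⟨?_, by simp, ?_⟩
  · rw [List.pairwise_reverse, List.pairwise_map]
    refine List.Pairwise.imp_of_mem ?_ (S.sortedLT_sort.pairwise) -- pairwise < on sort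
    intro a b ha hb hab
    have ha' : a ∈ S := (Finset.mem_sort _).1 ha
    have hb' : b ∈ S := (Finset.mem_sort _).1 hb
    have : b ≠ a + 1 := fun h => hS a ha' (h ▸ hb')
    omega
  · intro a ha b hb
    simp only [List.mem_singleton] at hb
    subst hb
    simp only [List.mem_reverse, List.mem_map] at ha
    obtain ⟨x, -, rfl⟩ := ha
    omega

private lemma listOf_sum (S : Finset ℕ) (f : ℕ → ℕ) :
    ((((S.sort (· ≤ ·)).map (· + 2)).reverse).map f).sum = ∑ i ∈ S, f (i + 2) := by
  rw [List.map_reverse, List.sum_reverse, List.map_map,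
    ← List.sum_toFinset _ (S.sort_nodup (· ≤ ·)), Finset.sort_toFinset]
  rfl

private lemma hF_fib (F : ℕ → ℕ) (h0 : F 0 = 1) (h1 : F 1 = 2)
    (hrec : ∀ n, F (n + 2) = F (n + 1) + F n) : ∀ i, F i = fib (i + 2) := by
  intro i
  induction i using Nat.twoStepInduction with
  | zero => simpa using h0
  | one => simpa [fib_add_two] using h1
  | more n ih1 ih2 =>
    rw [hrec, ih1, ih2]
    have := fib_add_two (n := n + 2)
    rw [show n + 2 + 1 = n + 1 + 2 from rfl] at this
    omega

/-- Zeckendorf's theorem: with `F(0)=1`, `F(1)=2`, `F(n+2)=F(n+1)+F(n)`, every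
natural number has a unique representation as a sum of non-consecutive terms of `F`. -/
theorem stmt9 (F : ℕ → ℕ) (h0 : F 0 = 1) (h1 : F 1 = 2)
    (hrec : ∀ n, F (n + 2) = F (n + 1) + F n) (n : ℕ) :
    ∃! S : Finset ℕ, (∀ i ∈ S, i + 1 ∉ S) ∧ n = ∑ i ∈ S, F i := by
  have hF := hF_fib F h0 h1 hrec
  set l := Nat.zeckendorf n with hl
  obtain ⟨hp, h2⟩ := zeck_facts (Nat.isZeckendorfRep_zeckendorf n)
  have hnd : l.Nodup := hp.imp (fun h => by omega)
  refine ⟨(l.map (· - 2)).toFinset, ⟨?_, ?_⟩, ?_⟩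
  · -- no two consecutive
    intro i hi hi1
    simp only [List.mem_toFinset, List.mem_map] at hi hi1
    obtain ⟨a, ha, rfl⟩ := hi
    obtain ⟨b, hb, hba⟩ := hi1
    have ha2 := h2 a ha
    have hb2 := h2 b hb
    have hsym : b + 2 ≤ a ∨ a + 2 ≤ b := by
      have hp' : l.Pairwise (fun a b => b + 2 ≤ a ∨ a + 2 ≤ b) := hp.imp (fun h => Or.inl h)
      haveI : Std.Symm (fun a b : ℕ => b + 2 ≤ a ∨ a + 2 ≤ b) := ⟨fun x y h => h.symm⟩
      exact hp'.forall ha hb (by omega)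
    omega
  · -- sum
    have hnd' : (l.map (· - 2)).Nodup := by
      refine hnd.map_on ?_
      intro a ha b hb h
      have := h2 a ha; have := h2 b hb; omega
    rw [Finset.sum_congr rfl (fun i _ => hF i), List.sum_toFinset _ hnd', List.map_map]
    have : l.map ((fun i => fib (i + 2)) ∘ (· - 2)) = l.map fib := by
      refine List.map_congr_left ?_
      intro a ha
      have := h2 a ha
      simp only [Function.comp_apply]
      congr 1
      omega
    rw [this, Nat.sum_zeckendorf_fib n]
  · -- uniqueness
    rintro S ⟨hS, hsum⟩
    have hrep := listOf_isZeck S hS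
    have hsum' : ((((S.sort (· ≤ ·)).map (· + 2)).reverse).map fib).sum = n := by
      rw [listOf_sum, hsum]
      exact (Finset.sum_congr rfl (fun i _ => (hF i).symm))
    have hz : l = ((S.sort (· ≤ ·)).map (· + 2)).reverse := by
      rw [hl, ← hsum', Nat.zeckendorf_sum_fib hrep]
    rw [hz]
    ext i
    simp only [List.mem_toFinset, List.mem_map, List.mem_reverse]
    constructor
    · intro hi
      exact ⟨i + 2, ⟨i, (Finset.mem_sort _).2 hi, rfl⟩, rfl⟩
    · rintro ⟨a, ⟨x, hx, rfl⟩, rfl⟩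
      simpa using (Finset.mem_sort _).1 hx
end

section
/- Let β > 1 be a Parry number, k ≥ 1, and s a binary U_β-automatic sequence. Then there exists a constant c > 0 (depending on β, k, and the size of the generating automaton) such that C_{2k}(s, N) ≥ c·N for all sufficiently large N. -/
/-- Value of a digit word (most significant digit first) in the numeration system `U`. -/
def wval (U : ℕ → ℕ) : List ℕ → ℕ
  | [] => 0
  | c :: w => c * U w.length + wval U w

/-- Lexicographic order on infinite sequences of digits. -/
def LexLe (x y : ℕ → ℕ) : Prop :=
  x = y ∨ ∃ j : ℕ, (∀ i < j, x i = y i) ∧ x j < y j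

/-- The infinite sequence obtained from a finite word by padding with zeroes. -/
def padSeq (w : List ℕ) : ℕ → ℕ := fun j => w.getD j 0

/-- Parry admissibility: a word `w` belongs to `0*L_β` iff every suffix of `w`,
padded with zeroes, is lexicographically at most the quasi-greedy expansion `t`. -/
def Adm (t : ℕ → ℕ) (w : List ℕ) : Prop :=
  ∀ i : ℕ, LexLe (padSeq (w.drop i)) t

lemma wval_append (U : ℕ → ℕ) (u v : List ℕ) :
    wval U (u ++ v) = wval (fun n => U (n + v.length)) u + wval U v := by
  induction u with
  | nil => simp [wval]
  | cons c u ih =>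
      simp only [List.cons_append, wval, ih, List.append_eq, List.length_append]
      ring

lemma wval_eq_sum (U : ℕ → ℕ) : ∀ w : List ℕ,
    wval U w = ∑ i ∈ Finset.range w.length, w.getD i 0 * U (w.length - 1 - i) := by
  intro w
  induction w with
  | nil => simp [wval]
  | cons c w ih =>
      rw [wval, ih, List.length_cons, Finset.sum_range_succ', add_comm]
      simp only [List.getD_cons_succ, List.getD_cons_zero, Nat.add_sub_cancel, Nat.sub_zero]
      congr 1
      apply Finset.sum_congr rfl
      intro i _
      congr 2
      omega

lemma wval_replicate_zero (U : ℕ → ℕ) (b : ℕ) (z : List ℕ) :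
    wval U (List.replicate b 0 ++ z) = wval U z := by
  induction b with
  | zero => simp
  | succ b ih => simpa [List.replicate_succ, wval] using ih

lemma foldl_replicate_zero {R : Type*} (δ : R → ℕ → R) (b : ℕ) (r : R) :
    List.foldl δ r (List.replicate b 0) = (fun x => δ x 0)^[b] r := by
  induction b generalizing r with
  | zero => simp
  | succ b ih =>
      rw [List.replicate_succ, List.foldl_cons, ih, Function.iterate_succ_apply]

section AdmLemmas

variable {t U : ℕ → ℕ}

lemma adm_drop {w : List ℕ} (h : Adm t w) (i : ℕ) : Adm t (w.drop i) := by
  intro j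
  rw [List.drop_drop]
  exact h _

lemma adm_tail {c : ℕ} {w : List ℕ} (h : Adm t (c :: w)) : Adm t w := by
  intro j
  have := h (j + 1)
  simpa using this

lemma adm_replicate (ht0 : 0 < t 0) (b : ℕ) {z : List ℕ} (hz : Adm t z) :
    Adm t (List.replicate b 0 ++ z) := by
  induction b with
  | zero => simpa using hz
  | succ b ih =>
      rw [List.replicate_succ, List.cons_append]
      intro i
      cases i with
      | zero =>
          refine Or.inr ⟨0, fun i hi => absurd hi (Nat.not_lt_zero i), ?_⟩
          simpa [padSeq] using ht0
      | succ i => simpa using ih i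

lemma adm_bound (hU0 : U 0 = 1)
    (hUrec : ∀ n, U (n + 1) = 1 + ∑ i ∈ Finset.range (n + 1), t i * U (n - i))
    (hne : ∀ n, ∃ j, t (n + j) ≠ 0) :
    ∀ w : List ℕ, Adm t w → wval U w < U w.length := by
  suffices H : ∀ L, ∀ w : List ℕ, w.length ≤ L → Adm t w → wval U w < U w.length by
    intro w hw; exact H w.length w le_rfl hw
  intro L
  induction L with
  | zero =>
      intro w hw _
      have : w = [] := List.eq_nil_of_length_eq_zero (Nat.le_zero.mp hw)
      subst this
      simp [wval, hU0]
  | succ L ih =>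
      intro w hw hadm
      rcases Nat.eq_zero_or_pos w.length with h0 | hlen
      · have : w = [] := List.eq_nil_of_length_eq_zero h0
        subst this
        simp [wval, hU0]
      have hUn : U w.length = 1 + ∑ i ∈ Finset.range w.length, t i * U (w.length - 1 - i) := by
        obtain ⟨n', hn'⟩ : ∃ n', w.length = n' + 1 := ⟨w.length - 1, by omega⟩
        rw [hn', hUrec n']
        simp
      have hlex : LexLe (padSeq w) t := by
        have := hadm 0; rwa [List.drop_zero] at this
      rcases hlex with heq | ⟨j, hpre, hstrict⟩
      · exfalso
        obtain ⟨j, hj⟩ := hne w.length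
        apply hj
        have h1 : padSeq w (w.length + j) = t (w.length + j) := by rw [heq]
        rw [← h1]
        simp only [padSeq]
        apply List.getD_eq_default
        omega
      rcases lt_or_ge j w.length with hjn | hjn
      · -- j < w.length : digit strictly smaller at position j
        have hsplit : w = w.take (j + 1) ++ w.drop (j + 1) := (List.take_append_drop _ _).symm
        have hdroplen : (w.drop (j + 1)).length = w.length - 1 - j := by
          simp; omega
        have hdrop_bound : wval U (w.drop (j + 1)) < U (w.length - 1 - j) := by
          rw [← hdroplen]
          exact ih _ (by simp; omega) (adm_drop hadm (j + 1))
        have htakelen : (w.take (j + 1)).length = j + 1 := by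
          simp; omega
        have hgetD : ∀ i < j + 1, (w.take (j + 1)).getD i 0 = w.getD i 0 := by
          intro i hi
          conv_rhs => rw [hsplit]
          rw [List.getD_append _ _ _ _ (by omega)]
        have hval : wval U w =
            wval (fun m => U (m + (w.length - 1 - j))) (w.take (j + 1)) + wval U (w.drop (j + 1)) := by
          conv_lhs => rw [hsplit]
          rw [wval_append, hdroplen]
        have htake : wval (fun m => U (m + (w.length - 1 - j))) (w.take (j + 1)) =
            ∑ i ∈ Finset.range (j + 1), w.getD i 0 * U (w.length - 1 - i) := by
          rw [wval_eq_sum, htakelen]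
          apply Finset.sum_congr rfl
          intro i hi
          rw [Finset.mem_range] at hi
          rw [hgetD i hi]
          congr 2
          omega
        have hdig_pre : ∀ i < j, w.getD i 0 = t i := fun i hi => hpre i hi
        have hdig_j : w.getD j 0 < t j := hstrict
        have hS1 : ∑ i ∈ Finset.range (j + 1), w.getD i 0 * U (w.length - 1 - i)
            = (∑ i ∈ Finset.range j, t i * U (w.length - 1 - i)) + w.getD j 0 * U (w.length - 1 - j) := by
          rw [Finset.sum_range_succ]
          congr 1
          apply Finset.sum_congr rfl
          intro i hi
          rw [Finset.mem_range] at hi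
          rw [hdig_pre i hi]
        have hstep : wval U w < (∑ i ∈ Finset.range j, t i * U (w.length - 1 - i))
            + t j * U (w.length - 1 - j) := by
          rw [hval, htake, hS1]
          have h2 : wval U (w.drop (j + 1)) < U (w.length - 1 - j) := hdrop_bound
          have h3 : (w.getD j 0 + 1) * U (w.length - 1 - j) ≤ t j * U (w.length - 1 - j) :=
            Nat.mul_le_mul_right _ hdig_j
          calc (∑ i ∈ Finset.range j, t i * U (w.length - 1 - i)) + w.getD j 0 * U (w.length - 1 - j)
                + wval U (w.drop (j + 1))
              < (∑ i ∈ Finset.range j, t i * U (w.length - 1 - i)) + w.getD j 0 * U (w.length - 1 - j)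
                + U (w.length - 1 - j) := by omega
            _ = (∑ i ∈ Finset.range j, t i * U (w.length - 1 - i))
                + (w.getD j 0 + 1) * U (w.length - 1 - j) := by ring
            _ ≤ (∑ i ∈ Finset.range j, t i * U (w.length - 1 - i)) + t j * U (w.length - 1 - j) := by
                omega
        have hS2 : (∑ i ∈ Finset.range j, t i * U (w.length - 1 - i)) + t j * U (w.length - 1 - j)
            = ∑ i ∈ Finset.range (j + 1), t i * U (w.length - 1 - i) := (Finset.sum_range_succ _ _).symm
        have hS3 : ∑ i ∈ Finset.range (j + 1), t i * U (w.length - 1 - i)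
            ≤ ∑ i ∈ Finset.range w.length, t i * U (w.length - 1 - i) :=
          Finset.sum_le_sum_of_subset (Finset.range_subset_range.mpr (by omega))
        omega
      · -- j ≥ w.length : w is the full prefix of t
        have hdig : ∀ i < w.length, w.getD i 0 = t i := fun i hi => hpre i (by omega)
        have hsum2 : wval U w = ∑ i ∈ Finset.range w.length, t i * U (w.length - 1 - i) := by
          rw [wval_eq_sum]
          apply Finset.sum_congr rfl
          intro i hi
          rw [Finset.mem_range] at hi
          rw [hdig i hi]
        omega

end AdmLemmas

section Inj

variable {t U : ℕ → ℕ}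

lemma adm_inj (hU0 : U 0 = 1)
    (hUrec : ∀ n, U (n + 1) = 1 + ∑ i ∈ Finset.range (n + 1), t i * U (n - i))
    (hne : ∀ n, ∃ j, t (n + j) ≠ 0) :
    ∀ w1 w2 : List ℕ, Adm t w1 → Adm t w2 → w1.length = w2.length →
      wval U w1 = wval U w2 → w1 = w2 := by
  intro w1
  induction w1 with
  | nil =>
      intro w2 _ _ hlen _
      exact (List.eq_nil_of_length_eq_zero hlen.symm).symm
  | cons c1 u1 ih =>
      intro w2 h1 h2 hlen hval
      rcases w2 with _ | ⟨c2, u2⟩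
      · simp at hlen
      simp only [List.length_cons, Nat.add_right_cancel_iff] at hlen
      rw [wval, wval, hlen] at hval
      have hv1 : wval U u1 < U u2.length := by
        rw [← hlen]; exact adm_bound hU0 hUrec hne u1 (adm_tail h1)
      have hv2 : wval U u2 < U u2.length := adm_bound hU0 hUrec hne u2 (adm_tail h2)
      have hq : 0 < U u2.length := by omega
      have hc : c1 = c2 := by
        rcases lt_trichotomy c1 c2 with h | h | h
        · exfalso
          have : c1 * U u2.length + U u2.length ≤ c2 * U u2.length := by
            have := Nat.succ_le_of_lt h
            calc c1 * U u2.length + U u2.length = (c1 + 1) * U u2.length := by ring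
              _ ≤ c2 * U u2.length := Nat.mul_le_mul_right _ this
          omega
        · exact h
        · exfalso
          have : c2 * U u2.length + U u2.length ≤ c1 * U u2.length := by
            have := Nat.succ_le_of_lt h
            calc c2 * U u2.length + U u2.length = (c2 + 1) * U u2.length := by ring
              _ ≤ c1 * U u2.length := Nat.mul_le_mul_right _ this
          omega
      subst hc
      have : wval U u1 = wval U u2 := by omega
      rw [ih u2 (adm_tail h1) (adm_tail h2) hlen this]

end Inj

section Ufacts

variable {t U : ℕ → ℕ}

lemma U_ge_one (hU0 : U 0 = 1)
    (hUrec : ∀ n, U (n + 1) = 1 + ∑ i ∈ Finset.range (n + 1), t i * U (n - i)) :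
    ∀ n, 1 ≤ U n := by
  intro n
  cases n with
  | zero => omega
  | succ n => rw [hUrec]; omega

lemma U_strictMono (hU0 : U 0 = 1)
    (hUrec : ∀ n, U (n + 1) = 1 + ∑ i ∈ Finset.range (n + 1), t i * U (n - i))
    (ht0 : 0 < t 0) : StrictMono U := by
  apply strictMono_nat_of_lt_succ
  intro n
  rw [hUrec]
  have h1 : t 0 * U (n - 0) ≤ ∑ i ∈ Finset.range (n + 1), t i * U (n - i) :=
    Finset.single_le_sum (f := fun i => t i * U (n - i)) (fun i _ => Nat.zero_le _)
      (Finset.mem_range.mpr (by omega))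
  have h2 : U n ≤ t 0 * U n := Nat.le_mul_of_pos_left _ ht0
  simp only [Nat.sub_zero] at h1
  omega

lemma rep_eq (hU0 : U 0 = 1)
    (hUrec : ∀ n, U (n + 1) = 1 + ∑ i ∈ Finset.range (n + 1), t i * U (n - i))
    (hne : ∀ n, ∃ j, t (n + j) ≠ 0) (ht0 : 0 < t 0)
    (repU : ℕ → List ℕ)
    (hrep_val : ∀ n, wval U (repU n) = n)
    (hrep_adm : ∀ n, Adm t (repU n))
    (hrep_lead : ∀ n c w, repU n = c :: w → c ≠ 0)
    (rest : List ℕ) (hadm : Adm t (1 :: rest)) :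
    repU (wval U (1 :: rest)) = 1 :: rest := by
  have hmono := U_strictMono hU0 hUrec ht0
  set v := wval U (1 :: rest) with hv
  have hvpos : 0 < v := by
    rw [hv, wval]
    have := U_ge_one (t := t) hU0 hUrec rest.length
    omega
  have hvlt : v < U (rest.length + 1) := by
    have := adm_bound hU0 hUrec hne _ hadm
    simpa using this
  have hlen : (repU v).length ≤ rest.length + 1 := by
    by_contra h
    push_neg at h
    rcases hw : repU v with _ | ⟨c, u⟩
    · rw [hw] at h; simp at h
    have hc : c ≠ 0 := hrep_lead v c u hw
    have hval' : v = c * U u.length + wval U u := by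
      conv_lhs => rw [← hrep_val v, hw]
      rfl
    have h1 : U (rest.length + 1) ≤ U u.length := by
      apply hmono.monotone
      rw [hw] at h
      simp at h
      omega
    have h2 : U u.length ≤ c * U u.length := Nat.le_mul_of_pos_left _ (Nat.pos_of_ne_zero hc)
    omega
  set b := rest.length + 1 - (repU v).length with hb
  have hW' : List.replicate b 0 ++ repU v = 1 :: rest := by
    apply adm_inj hU0 hUrec hne
    · exact adm_replicate ht0 b (hrep_adm v)
    · exact hadm
    · simp [hb]; omega
    · rw [wval_replicate_zero, hrep_val]
  rcases Nat.eq_zero_or_pos b with hb0 | hbpos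
  · rw [hb0] at hW'
    simpa using hW'
  · exfalso
    obtain ⟨b', hb'⟩ : ∃ b', b = b' + 1 := ⟨b - 1, by omega⟩
    rw [hb', List.replicate_succ] at hW'
    simp at hW'

end Ufacts

noncomputable def Sval (β : ℝ) (t : ℕ → ℕ) (m : ℕ) : ℝ :=
  ∑' j : ℕ, (t (m + j) : ℝ) * β⁻¹ ^ (j + 1)

section Analytic

variable {β : ℝ} {t : ℕ → ℕ}

lemma S_summable (hβ : 1 < β) (hdig : ∀ j, (t j : ℝ) < β) (m : ℕ) :
    Summable (fun j : ℕ => (t (m + j) : ℝ) * β⁻¹ ^ (j + 1)) := by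
  have hβ0 : (0:ℝ) < β := by linarith
  have hinv : β⁻¹ < 1 := inv_lt_one_of_one_lt₀ hβ
  have hinv0 : (0:ℝ) ≤ β⁻¹ := by positivity
  refine Summable.of_nonneg_of_le (fun j => by positivity) (fun j => ?_)
    (summable_geometric_of_lt_one hinv0 hinv)
  calc (t (m + j) : ℝ) * β⁻¹ ^ (j + 1) ≤ β * β⁻¹ ^ (j + 1) := by
          apply mul_le_mul_of_nonneg_right (le_of_lt (hdig _)) (by positivity)
      _ = β⁻¹ ^ j := by
          rw [pow_succ]
          field_simp

lemma S_rec (hβ : 1 < β) (hdig : ∀ j, (t j : ℝ) < β) (m : ℕ) :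
    β * Sval β t m = (t m : ℝ) + Sval β t (m + 1) := by
  have hβ0 : (0:ℝ) < β := by linarith
  have h1 : Sval β t m = (t m : ℝ) * β⁻¹ + β⁻¹ * Sval β t (m + 1) := by
    rw [Sval, Summable.tsum_eq_zero_add (S_summable hβ hdig m)]
    congr 1
    · norm_num
    · rw [Sval, ← tsum_mul_left]
      apply tsum_congr
      intro j
      have : m + (j + 1) = m + 1 + j := by omega
      rw [this]
      ring
  rw [h1]
  field_simp

lemma S_zero (hsum : ∑' j : ℕ, (t j : ℝ) * β⁻¹ ^ (j + 1) = 1) : Sval β t 0 = 1 := by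
  rw [Sval, ← hsum]
  apply tsum_congr
  intro j
  rw [Nat.zero_add]

lemma beta_identity (hβ : 1 < β) (hdig : ∀ j, (t j : ℝ) < β)
    (hsum : ∑' j : ℕ, (t j : ℝ) * β⁻¹ ^ (j + 1) = 1) :
    ∀ n : ℕ, β ^ n = (∑ j ∈ Finset.range n, (t j : ℝ) * β ^ (n - 1 - j)) + Sval β t n := by
  intro n
  induction n with
  | zero => simp [S_zero hsum]
  | succ n ih =>
      have hβ0 : (0:ℝ) < β := by linarith
      calc β ^ (n + 1) = β * β ^ n := by ring
        _ = β * ((∑ j ∈ Finset.range n, (t j : ℝ) * β ^ (n - 1 - j)) + Sval β t n) := by rw [ih]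
        _ = (∑ j ∈ Finset.range n, (t j : ℝ) * (β * β ^ (n - 1 - j))) + β * Sval β t n := by
            rw [mul_add, Finset.mul_sum]
            congr 1
            exact Finset.sum_congr rfl (fun j _ => by ring)
        _ = (∑ j ∈ Finset.range n, (t j : ℝ) * β ^ (n - j)) + ((t n : ℝ) + Sval β t (n + 1)) := by
            rw [S_rec hβ hdig]
            congr 1
            apply Finset.sum_congr rfl
            intro j hj
            rw [Finset.mem_range] at hj
            congr 1
            rw [← pow_succ']
            congr 1
            omega
        _ = (∑ j ∈ Finset.range (n + 1), (t j : ℝ) * β ^ (n + 1 - 1 - j)) + Sval β t (n + 1) := by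
            rw [Finset.sum_range_succ]
            have h1 : ∀ j ∈ Finset.range n, (t j : ℝ) * β ^ (n - j) = (t j : ℝ) * β ^ (n + 1 - 1 - j) := by
              intro j hj
              norm_num
            rw [Finset.sum_congr rfl h1]
            simp [add_assoc]

end Analytic

section Bounds

variable {β : ℝ} {t : ℕ → ℕ} {U : ℕ → ℕ}

lemma t0_pos (hβ : 1 < β) (hdig : ∀ j, (t j : ℝ) < β)
    (hsum : ∑' j : ℕ, (t j : ℝ) * β⁻¹ ^ (j + 1) = 1)
    (hSle : ∀ m, Sval β t m ≤ 1) : 0 < t 0 := by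
  have h0 := S_rec hβ hdig 0
  rw [S_zero hsum] at h0
  have h1 := hSle 1
  have : (0:ℝ) < (t 0 : ℝ) := by linarith
  exact_mod_cast this

lemma t_ne (hβ : 1 < β) (hSpos : ∀ m, 0 < Sval β t m) :
    ∀ n, ∃ j, t (n + j) ≠ 0 := by
  intro n
  by_contra h
  push_neg at h
  have : Sval β t n = 0 := by
    rw [Sval]
    have : ∀ j : ℕ, (t (n + j) : ℝ) * β⁻¹ ^ (j + 1) = 0 := by
      intro j; rw [h j]; simp
    rw [tsum_congr this]
    simp
  have := hSpos n
  linarith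

lemma U_lower (hβ : 1 < β) (hdig : ∀ j, (t j : ℝ) < β)
    (hsum : ∑' j : ℕ, (t j : ℝ) * β⁻¹ ^ (j + 1) = 1)
    (hSle : ∀ m, Sval β t m ≤ 1) (hU0 : U 0 = 1)
    (hUrec : ∀ n, U (n + 1) = 1 + ∑ i ∈ Finset.range (n + 1), t i * U (n - i)) :
    ∀ n, β ^ n ≤ (U n : ℝ) := by
  intro n
  induction n using Nat.strong_induction_on with
  | _ n ih =>
    cases n with
    | zero => simp [hU0]
    | succ n =>
        rw [beta_identity hβ hdig hsum (n + 1), hUrec n]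
        push_cast
        have hterm : ∑ j ∈ Finset.range (n + 1), (t j : ℝ) * β ^ (n - j)
            ≤ ∑ j ∈ Finset.range (n + 1), (t j : ℝ) * (U (n - j) : ℝ) := by
          apply Finset.sum_le_sum
          intro j hj
          rw [Finset.mem_range] at hj
          have h1 : β ^ (n - j) ≤ (U (n - j) : ℝ) := ih (n - j) (by omega)
          exact mul_le_mul_of_nonneg_left h1 (by positivity)
        have := hSle (n + 1)
        linarith

lemma U_upper (hβ : 1 < β) (hdig : ∀ j, (t j : ℝ) < β)
    (hsum : ∑' j : ℕ, (t j : ℝ) * β⁻¹ ^ (j + 1) = 1) {σ : ℝ}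
    (hσ0 : 0 ≤ σ) (hσ1 : σ ≤ 1) (hσS : ∀ m, σ ≤ Sval β t m) (hU0 : U 0 = 1)
    (hUrec : ∀ n, U (n + 1) = 1 + ∑ i ∈ Finset.range (n + 1), t i * U (n - i)) :
    ∀ n, σ * (U n : ℝ) ≤ β ^ n := by
  intro n
  induction n using Nat.strong_induction_on with
  | _ n ih =>
    cases n with
    | zero => simp [hU0]; linarith
    | succ n =>
        rw [beta_identity hβ hdig hsum (n + 1), hUrec n]
        push_cast
        have hrw : σ * (1 + ∑ j ∈ Finset.range (n + 1), (t j : ℝ) * (U (n - j) : ℝ))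
            = σ + ∑ j ∈ Finset.range (n + 1), (t j : ℝ) * (σ * (U (n - j) : ℝ)) := by
          rw [mul_add, Finset.mul_sum]
          congr 1
          · ring
          · exact Finset.sum_congr rfl (fun j _ => by ring)
        rw [hrw]
        have hterm : ∑ j ∈ Finset.range (n + 1), (t j : ℝ) * (σ * (U (n - j) : ℝ))
            ≤ ∑ j ∈ Finset.range (n + 1), (t j : ℝ) * β ^ (n - j) := by
          apply Finset.sum_le_sum
          intro j hj
          rw [Finset.mem_range] at hj
          have h1 : σ * (U (n - j) : ℝ) ≤ β ^ (n - j) := ih (n - j) (by omega)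
          exact mul_le_mul_of_nonneg_left h1 (by positivity)
        have := hσS (n + 1)
        linarith

lemma sigma_exists (hβ : 1 < β) (m₀ p : ℕ) (hp : 0 < p)
    (hper : ∀ j ≥ m₀, t (j + p) = t j) (hSpos : ∀ m, 0 < Sval β t m) :
    ∃ σ : ℝ, 0 < σ ∧ ∀ n, σ ≤ Sval β t n := by
  have hne : ((Finset.range (m₀ + p + 1)).image (Sval β t)).Nonempty := by
    apply Finset.Nonempty.image
    exact ⟨0, Finset.mem_range.mpr (by omega)⟩
  refine ⟨((Finset.range (m₀ + p + 1)).image (Sval β t)).min' hne, ?_, ?_⟩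
  · obtain ⟨n, _, hn⟩ := Finset.mem_image.mp (Finset.min'_mem _ hne)
    rw [← hn]
    exact hSpos n
  · intro n
    induction n using Nat.strong_induction_on with
    | _ n ih =>
      rcases le_or_gt n (m₀ + p) with h | h
      · apply Finset.min'_le
        exact Finset.mem_image.mpr ⟨n, Finset.mem_range.mpr (by omega), rfl⟩
      · have heq : Sval β t n = Sval β t (n - p) := by
          rw [Sval, Sval]
          apply tsum_congr
          intro j
          have h1 : n - p + j ≥ m₀ := by omega
          have h2 := hper (n - p + j) h1
          have h3 : n - p + j + p = n + j := by omega
          rw [← h3, h2]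
        rw [heq]
        exact ih (n - p) (by omega)

end Bounds

lemma getD_replicate_zero (b i : ℕ) : (List.replicate b 0).getD i 0 = 0 := by
  induction b generalizing i with
  | zero => simp
  | succ b ih =>
      cases i with
      | zero => simp [List.replicate_succ]
      | succ i => simp only [List.replicate_succ, List.getD_cons_succ]; exact ih i

lemma head_lex {t : ℕ → ℕ} (ht0 : 0 < t 0) (hne1 : ∃ j, t (1 + j) ≠ 0) :
    ∃ J : ℕ, ∀ b ≥ J, ∀ z : List ℕ, LexLe (padSeq (1 :: (List.replicate b 0 ++ z))) t := by
  by_cases h2 : 2 ≤ t 0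
  · refine ⟨0, fun b _ z => Or.inr ⟨0, fun i hi => absurd hi (Nat.not_lt_zero i), ?_⟩⟩
    simpa [padSeq] using (show 1 < t 0 by omega)
  · have ht01 : t 0 = 1 := by omega
    refine ⟨Nat.find hne1 + 1, fun b hb z => Or.inr ⟨Nat.find hne1 + 1, ?_, ?_⟩⟩
    · intro i hi
      cases i with
      | zero => simpa [padSeq] using ht01.symm
      | succ i =>
          have h1 : padSeq (1 :: (List.replicate b 0 ++ z)) (i + 1) = 0 := by
            simp only [padSeq, List.getD_cons_succ]
            rw [List.getD_append _ _ _ _ (by simp; omega)]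
            exact getD_replicate_zero b i
          have h2' : t (i + 1) = 0 := by
            have h3 := Nat.find_min hne1 (m := i) (by omega)
            push_neg at h3
            rwa [Nat.add_comm] at h3
          rw [h1, h2']
    · have h1 : padSeq (1 :: (List.replicate b 0 ++ z)) (Nat.find hne1 + 1) = 0 := by
        simp only [padSeq, List.getD_cons_succ]
        rw [List.getD_append _ _ _ _ (by rw [List.length_replicate]; omega)]
        exact getD_replicate_zero b _
      have h2' : t (1 + Nat.find hne1) ≠ 0 := Nat.find_spec hne1
      have h3 : 1 + Nat.find hne1 = Nat.find hne1 + 1 := Nat.add_comm _ _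
      rw [h3] at h2'
      rw [h1]
      omega

/-- Main theorem: let `β > 1` be a Parry number, with quasi-greedy expansion
`d*_β(1) = t(0)t(1)⋯` (so `1 = Σ_j t(j)β^{-(j+1)}`, all tails positive and bounded,
`t` ultimately periodic) and canonical Parry–Bertrand numeration system `U_β`
(`U(0)=1`, `U(n) = t(0)U(n-1)+⋯+t(n-1)U(0)+1`) with language `L_β` (admissible words
with nonzero leading digit). For every binary `U_β`-automatic sequence `s`, i.e.
`s(n) = τ(δ*(r0, rep(n)))` for a DFAO with finite state set `R`, and every `k ≥ 1`,
there is a constant `c > 0` with `C_{2k}(s,N) ≥ c·N` for all sufficiently large `N`. -/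
theorem stmt17 (β : ℝ) (hβ : 1 < β) (t : ℕ → ℕ)
    (hdig : ∀ j, (t j : ℝ) < β)
    (hsum : ∑' j : ℕ, (t j : ℝ) * β⁻¹ ^ (j + 1) = 1)
    (htail_pos : ∀ m : ℕ, 0 < ∑' j : ℕ, (t (m + j) : ℝ) * β⁻¹ ^ (j + 1))
    (htail_le : ∀ m : ℕ, ∑' j : ℕ, (t (m + j) : ℝ) * β⁻¹ ^ (j + 1) ≤ 1)
    (hParry : ∃ m p : ℕ, 0 < p ∧ ∀ j ≥ m, t (j + p) = t j)
    (U : ℕ → ℕ) (hU0 : U 0 = 1)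
    (hUrec : ∀ n, U (n + 1) = 1 + ∑ i ∈ Finset.range (n + 1), t i * U (n - i))
    (repU : ℕ → List ℕ)
    (hrep_val : ∀ n, wval U (repU n) = n)
    (hrep_adm : ∀ n, Adm t (repU n))
    (hrep_lead : ∀ n c w, repU n = c :: w → c ≠ 0)
    {R : Type*} [Fintype R] (δ : R → ℕ → R) (r0 : R) (τ : R → ℕ) (hτ : ∀ r, τ r ≤ 1)
    (s : ℕ → ℕ) (hs : ∀ n, s n = τ (List.foldl δ r0 (repU n)))
    (k : ℕ) (hk : 1 ≤ k) :
    ∃ c : ℝ, 0 < c ∧ ∃ N₀ : ℕ, ∀ N ≥ N₀, c * N ≤ (corrMeasure s (2 * k) N : ℝ) := by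
  classical
  have hβ0 : (0:ℝ) < β := lt_trans one_pos hβ
  have hSle : ∀ m, Sval β t m ≤ 1 := fun m => htail_le m
  have hSpos : ∀ m, 0 < Sval β t m := fun m => htail_pos m
  have ht0 : 0 < t 0 := t0_pos hβ hdig hsum hSle
  have hne : ∀ n, ∃ j, t (n + j) ≠ 0 := t_ne hβ hSpos
  have hmono : StrictMono U := U_strictMono hU0 hUrec ht0
  have hU1 : ∀ n, 1 ≤ U n := U_ge_one (t := t) hU0 hUrec
  obtain ⟨m₀, p, hp, hper⟩ := hParry
  obtain ⟨σ, hσpos, hσS⟩ := sigma_exists hβ m₀ p hp hper hSpos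
  have hσ1 : σ ≤ 1 := le_trans (hσS 0) (hSle 0)
  have hlow : ∀ n, β ^ n ≤ (U n : ℝ) := U_lower hβ hdig hsum hSle hU0 hUrec
  have hupp : ∀ n, σ * (U n : ℝ) ≤ β ^ n :=
    U_upper hβ hdig hsum (le_of_lt hσpos) hσ1 hσS hU0 hUrec
  -- the automaton: eventual periodicity of the orbit of δ(r0,1) under reading 0s
  set f : R → R := fun r => δ r 0 with hf
  set g : ℕ → R := fun a => f^[a] (δ r0 1) with hg
  obtain ⟨A₁, P, hP, hgp⟩ : ∃ A₁ P : ℕ, 0 < P ∧ ∀ c, g (A₁ + c + P) = g (A₁ + c) := by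
    have hni : ∃ a b : ℕ, a ≠ b ∧ g a = g b := by
      have h1 : ¬ Function.Injective g := by
        intro hinj
        have : Finite ℕ := Finite.of_injective g hinj
        exact not_finite ℕ
      rw [Function.not_injective_iff] at h1
      obtain ⟨a, b, h2, h3⟩ := h1
      exact ⟨a, b, h3, h2⟩
    obtain ⟨a0, b0, hab, habeq⟩ := hni
    have hkey : ∀ a0 b0 : ℕ, a0 < b0 → g a0 = g b0 →
        ∃ A₁ P : ℕ, 0 < P ∧ ∀ c, g (A₁ + c + P) = g (A₁ + c) := by
      intro a0 b0 hlt heq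
      refine ⟨a0, b0 - a0, by omega, fun c => ?_⟩
      have h1 : a0 + c + (b0 - a0) = c + b0 := by omega
      have h2 : a0 + c = c + a0 := by omega
      rw [h1, h2, hg]
      simp only
      rw [Function.iterate_add_apply, Function.iterate_add_apply]
      rw [show f^[b0] (δ r0 1) = f^[a0] (δ r0 1) from heq.symm]
    rcases lt_or_gt_of_ne hab with h | h
    · exact hkey a0 b0 h habeq
    · exact hkey b0 a0 h habeq.symm
  have hgq : ∀ c q, g (A₁ + c + q * P) = g (A₁ + c) := by
    intro c q
    induction q with
    | zero => simp
    | succ q ih =>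
        have h1 : A₁ + c + (q + 1) * P = A₁ + (c + q * P) + P := by ring
        rw [h1, hgp (c + q * P)]
        have h2 : A₁ + (c + q * P) = A₁ + c + q * P := by ring
        rw [h2, ih]
  obtain ⟨J, hJ⟩ := head_lex ht0 (hne 1)
  set A := A₁ + J + 1 with hA
  have hlenle : ∀ n m : ℕ, n < U m → (repU n).length ≤ m := by
    intro n m hn
    by_contra h
    push_neg at h
    rcases hw : repU n with _ | ⟨c, u⟩
    · rw [hw] at h; simp at h
    · have hc := hrep_lead n c u hw
      have hval : n = c * U u.length + wval U u := by
        conv_lhs => rw [← hrep_val n, hw]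
        rfl
      have h1 : U m ≤ U u.length := by
        apply hmono.monotone
        rw [hw] at h
        simp at h
        omega
      have h2 : U u.length ≤ c * U u.length :=
        Nat.le_mul_of_pos_left _ (Nat.pos_of_ne_zero hc)
      omega
  -- key claim
  have key : ∀ m N : ℕ, U m + U (A + 2 * k * P + m) ≤ N →
      U m ≤ corrMeasure s (2 * k) N := by
    intro m N hN
    set D : Fin (2 * k) → ℕ := fun i => U (A + (i.1 + 1) * P + m) with hD
    have hsval : ∀ n : ℕ, n < U m → ∀ i : Fin (2 * k),
        s (n + D i) = τ (List.foldl δ (g (A + (m - (repU n).length))) (repU n)) := by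
      intro n hn i
      set l := (repU n).length with hl
      have hlm : l ≤ m := hlenle n m hn
      set b := A + (i.1 + 1) * P + (m - l) with hb
      set rest := List.replicate b 0 ++ repU n with hrest
      have hadmW : Adm t (1 :: rest) := by
        intro i0
        cases i0 with
        | zero =>
            rw [List.drop_zero, hrest]
            exact hJ b (by omega) (repU n)
        | succ i0 =>
            simp only [List.drop_succ_cons]
            exact adm_replicate ht0 b (hrep_adm n) i0
      have hrestlen : rest.length = b + l := by
        simp [hrest, hl]
      have hwv : wval U (1 :: rest) = U (A + (i.1 + 1) * P + m) + n := by
        rw [wval, hrestlen]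
        rw [hrest, wval_replicate_zero, hrep_val]
        have : b + l = A + (i.1 + 1) * P + m := by omega
        rw [this]
        ring
      have hrepW : repU (n + D i) = 1 :: rest := by
        have h1 := rep_eq hU0 hUrec hne ht0 repU hrep_val hrep_adm hrep_lead rest hadmW
        rw [hwv] at h1
        rw [hD]
        simp only
        rw [Nat.add_comm n _]
        exact h1
      rw [hs, hrepW, List.foldl_cons, hrest, List.foldl_append, foldl_replicate_zero]
      have hgb : g b = g (A + (m - l)) := by
        have h1 : b = A₁ + (J + 1 + (m - l)) + (i.1 + 1) * P := by rw [hb, hA]; ring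
        have h2 : A + (m - l) = A₁ + (J + 1 + (m - l)) := by rw [hA]; ring
        rw [h1, h2, hgq]
      rw [hg] at hgb ⊢
      simp only at hgb ⊢
      rw [hgb]
    -- the correlation sum equals U m
    have hcorr : corrV s (U m) D = (U m : ℤ) := by
      rw [corrV]
      have h1 : ∀ n ∈ Finset.range (U m),
          (-1 : ℤ) ^ (∑ i : Fin (2 * k), s (n + D i)) = 1 := by
        intro n hn
        rw [Finset.mem_range] at hn
        have h2 : ∀ i : Fin (2 * k), s (n + D i)
            = τ (List.foldl δ (g (A + (m - (repU n).length))) (repU n)) := hsval n hn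
        rw [Finset.sum_congr rfl (fun i _ => h2 i)]
        rw [Finset.sum_const, Finset.card_univ, Fintype.card_fin, smul_eq_mul]
        rw [show 2 * k * τ (List.foldl δ (g (A + (m - (repU n).length))) (repU n))
            = 2 * (k * τ (List.foldl δ (g (A + (m - (repU n).length))) (repU n))) by ring]
        rw [pow_mul]
        norm_num
      rw [Finset.sum_congr rfl h1]
      simp
    -- membership and sSup
    have hmem : U m ∈ {c : ℕ | ∃ M : ℕ, ∃ D' : Fin (2 * k) → ℕ, 0 < M ∧ StrictMono D' ∧
        (∀ i, M + D' i ≤ N) ∧ c = (corrV s M D').natAbs} := by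
      refine ⟨U m, D, hU1 m, ?_, ?_, ?_⟩
      · intro i j hij
        apply hmono
        have : i.1 < j.1 := hij
        have := (Nat.mul_lt_mul_right hP).mpr (show i.1 + 1 < j.1 + 1 by omega)
        omega
      · intro i
        show U m + U (A + (i.1 + 1) * P + m) ≤ N
        have h1 : U (A + (i.1 + 1) * P + m) ≤ U (A + 2 * k * P + m) := by
          apply hmono.monotone
          have : i.1 < 2 * k := i.2
          have h2 : (i.1 + 1) * P ≤ 2 * k * P := Nat.mul_le_mul_right _ (by omega)
          omega
        omega
      · rw [hcorr]
        simp
    have hbdd : BddAbove {c : ℕ | ∃ M : ℕ, ∃ D' : Fin (2 * k) → ℕ, 0 < M ∧ StrictMono D' ∧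
        (∀ i, M + D' i ≤ N) ∧ c = (corrV s M D').natAbs} := by
      refine ⟨N, fun c hc => ?_⟩
      obtain ⟨M, D', hM, _, hDle, hceq⟩ := hc
      have h1 : |corrV s M D'| ≤ (M : ℤ) := by
        rw [corrV]
        calc |∑ n ∈ Finset.range M, (-1 : ℤ) ^ (∑ i, s (n + D' i))|
            ≤ ∑ n ∈ Finset.range M, |(-1 : ℤ) ^ (∑ i, s (n + D' i))| :=
              Finset.abs_sum_le_sum_abs _ _
          _ = ∑ n ∈ Finset.range M, 1 := by
              apply Finset.sum_congr rfl
              intro n _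
              rw [abs_pow]
              simp
          _ = (M : ℤ) := by simp
      have h2 : c ≤ M := by
        rw [hceq]
        have h3 : ((corrV s M D').natAbs : ℤ) ≤ (M : ℤ) := by
          rwa [← Int.abs_eq_natAbs]
        exact_mod_cast h3
      have h4 : M ≤ N := by
        have := hDle ⟨0, by omega⟩
        omega
      omega
    exact le_trans (le_refl _) (le_csSup hbdd hmem)
  -- final assembly
  set CC := 1 + β ^ (A + 2 * k * P) with hCC
  have hCCpos : (0:ℝ) < CC := by positivity
  refine ⟨σ / (CC * β), by positivity, ⌈CC / σ⌉₊ + 1, ?_⟩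
  intro N hN
  have hNR : CC / σ ≤ (N : ℝ) := by
    calc CC / σ ≤ (⌈CC / σ⌉₊ : ℝ) := Nat.le_ceil _
      _ ≤ (N : ℝ) := by exact_mod_cast Nat.le_of_succ_le hN
  have hNpos : (0:ℝ) < N := lt_of_lt_of_le (by positivity) hNR
  set X := σ * N / CC with hX
  have hX1 : (1:ℝ) ≤ X := by
    rw [hX, le_div_iff₀ hCCpos]
    rw [div_le_iff₀ hσpos] at hNR
    linarith [hNR]
  have hex : ∃ e : ℕ, X < β ^ e := pow_unbounded_of_one_lt X hβ
  have he0 : X < β ^ (Nat.find hex) := Nat.find_spec hex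
  have he0pos : Nat.find hex ≠ 0 := by
    intro h
    rw [h] at he0
    simp at he0
    linarith
  set m := Nat.find hex - 1 with hm
  have hmle : β ^ m ≤ X := by
    by_contra h
    push_neg at h
    exact absurd (Nat.find_min hex (m := m) (by omega)) (by simp [h])
  have hm1 : X < β ^ (m + 1) := by
    have : m + 1 = Nat.find hex := by omega
    rw [this]
    exact he0
  -- U m + U (A + 2kP + m) ≤ N
  have hcon : U m + U (A + 2 * k * P + m) ≤ N := by
    have h1 : (U m : ℝ) ≤ β ^ m / σ := by
      rw [le_div_iff₀ hσpos]
      have := hupp m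
      linarith
    have h2 : (U (A + 2 * k * P + m) : ℝ) ≤ β ^ (A + 2 * k * P) * β ^ m / σ := by
      rw [le_div_iff₀ hσpos]
      have := hupp (A + 2 * k * P + m)
      rw [pow_add] at this
      linarith
    have h3 : (U m : ℝ) + (U (A + 2 * k * P + m) : ℝ) ≤ CC * β ^ m / σ := by
      rw [hCC]
      have : (1 + β ^ (A + 2 * k * P)) * β ^ m / σ
          = β ^ m / σ + β ^ (A + 2 * k * P) * β ^ m / σ := by ring
      rw [this]
      linarith
    have h4 : CC * β ^ m / σ ≤ (N : ℝ) := by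
      rw [div_le_iff₀ hσpos]
      have h5 : CC * β ^ m ≤ CC * X := mul_le_mul_of_nonneg_left hmle (le_of_lt hCCpos)
      have h6 : CC * X = σ * N := by
        rw [hX]
        field_simp
      linarith
    have h6 : ((U m + U (A + 2 * k * P + m) : ℕ) : ℝ) ≤ (N : ℝ) := by
      push_cast
      linarith
    exact_mod_cast h6
  have hfin : (U m : ℝ) ≤ (corrMeasure s (2 * k) N : ℝ) := by
    exact_mod_cast key m N hcon
  have hcN : σ / (CC * β) * N ≤ β ^ m := by
    have h1 : X < β ^ m * β := by
      rw [← pow_succ] at *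
      exact hm1
    have h2 : σ / (CC * β) * N = X / β := by
      rw [hX]
      field_simp
    rw [h2]
    rw [div_le_iff₀ hβ0]
    linarith
  calc σ / (CC * β) * N ≤ β ^ m := hcN
    _ ≤ (U m : ℝ) := hlow m
    _ ≤ (corrMeasure s (2 * k) N : ℝ) := hfin
end
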